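/- Let K be a field, D a set of directions in PG_{n-1}(K) (one-dimensional subspaces of K^n), L a finite set of affine lines in K^n whose directions lie in D, and S a finite set of points such that every line of L contains at least N points of S; assume moreover that for every direction in D there is a line of L with that direction. Let r \geq 1 and let U be a subspace of polynomials of K[X_1,...,X_n] of total degree at most rN-1 such that for every nonzero f in U, the top-degree homogeneous part f* does not vanish to multiplicity r at every point of D (viewed as nonzero vectors v spanning the directions). Then \binom{2r+n-2}{n} |S| \geq dim U. -/

import Mathlib

open MvPolynomial

/-- The multivariate Hasse derivative `∂^j`. -/
noncomputable def mvHasseDeriv {K : Type*} [CommSemiring K] {n : ℕ} (j : Fin n →₀ ℕ)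
    (f : MvPolynomial (Fin n) K) : MvPolynomial (Fin n) K :=
  (AddMonoidAlgebra.coeff f).sum fun c a => monomial (c - j) (((∏ i ∈ j.support, (c i).choose (j i) : ℕ) : K) * a)

namespace KakeyaAux

variable {K : Type*} [Field K] {n : ℕ}

lemma mvHasseDeriv_def' (j : Fin n →₀ ℕ) (f : MvPolynomial (Fin n) K) :
    mvHasseDeriv j f
      = (AddMonoidAlgebra.coeff f).sum fun c a => monomial (c - j) (((∏ i, (c i).choose (j i) : ℕ) : K) * a) := by
  unfold mvHasseDeriv
  apply Finsupp.sum_congr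
  intro c _
  congr 2
  have h : (∏ i ∈ j.support, (c i).choose (j i)) = ∏ i, (c i).choose (j i) :=
    Finset.prod_subset (Finset.subset_univ _) (fun i _ hi => by
      simp [Finsupp.notMem_support_iff.mp hi])
  rw [h]

lemma mvHasseDeriv_eq_sum (j : Fin n →₀ ℕ) (f : MvPolynomial (Fin n) K) :
    mvHasseDeriv j f
      = ∑ c ∈ f.support, monomial (c - j) (((∏ i, (c i).choose (j i) : ℕ) : K) * coeff c f) := by
  rw [mvHasseDeriv_def']; rfl

lemma coeff_mvHasseDeriv (j m : Fin n →₀ ℕ) (f : MvPolynomial (Fin n) K) :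
    coeff m (mvHasseDeriv j f)
      = ((∏ i, ((m + j) i).choose (j i) : ℕ) : K) * coeff (m + j) f := by
  rw [mvHasseDeriv_eq_sum, coeff_sum]
  simp_rw [coeff_monomial]
  rw [Finset.sum_eq_single (m + j)]
  · have h1 : m + j - j = m := by ext i; simp
    rw [if_pos h1]
  · intro c hc hne
    by_cases hcj : c - j = m
    · rw [if_pos hcj]
      have hnle : ¬ j ≤ c := by
        intro hle
        apply hne
        ext i
        have h1 : c i - j i = m i := by
          have := congrArg (fun z => z i) hcj
          simpa [Finsupp.tsub_apply] using this
        have h2 : j i ≤ c i := hle i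
        simp only [Finsupp.add_apply]
        omega
      obtain ⟨i, hi⟩ : ∃ i, c i < j i := by
        by_contra hcon
        push_neg at hcon
        exact hnle (fun i => hcon i)
      have : (∏ i, (c i).choose (j i)) = 0 :=
        Finset.prod_eq_zero (Finset.mem_univ i) (Nat.choose_eq_zero_of_lt hi)
      simp [this]
    · rw [if_neg hcj]
  · intro hns
    have : coeff (m + j) f = 0 := notMem_support_iff.mp hns
    simp [this]

noncomputable def mvHasseDerivL (j : Fin n →₀ ℕ) :
    MvPolynomial (Fin n) K →ₗ[K] MvPolynomial (Fin n) K where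
  toFun := mvHasseDeriv j
  map_add' f g := by ext m; simp [coeff_mvHasseDeriv, mul_add]
  map_smul' c f := by ext m; simp [coeff_mvHasseDeriv, coeff_smul]; ring

lemma mvHasseDeriv_add (j : Fin n →₀ ℕ) (f g : MvPolynomial (Fin n) K) :
    mvHasseDeriv j (f + g) = mvHasseDeriv j f + mvHasseDeriv j g :=
  (mvHasseDerivL j).map_add f g

lemma choose_tri (x y z : ℕ) :
    (x + y).choose y * (x + y + z).choose z = (y + z).choose z * (x + y + z).choose (y + z) := by
  have h1 := Nat.add_choose_mul_factorial_mul_factorial x y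
  have h2 := Nat.add_choose_mul_factorial_mul_factorial (x + y) z
  have h3 := Nat.add_choose_mul_factorial_mul_factorial y z
  have h4 := Nat.add_choose_mul_factorial_mul_factorial x (y + z)
  have hxyz : x + (y + z) = x + y + z := by omega
  rw [hxyz] at h4
  have hpos : 0 < Nat.factorial x * Nat.factorial y * Nat.factorial z := by positivity
  apply Nat.eq_of_mul_eq_mul_right hpos
  calc (x + y).choose y * (x + y + z).choose z * (Nat.factorial x * Nat.factorial y * Nat.factorial z)
      = ((x + y).choose y * Nat.factorial x * Nat.factorial y) * ((x + y + z).choose z * Nat.factorial z) := by ring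
    _ = Nat.factorial (x + y) * ((x + y + z).choose z * Nat.factorial z) := by rw [h1]
    _ = (x + y + z).choose z * Nat.factorial (x + y) * Nat.factorial z := by ring
    _ = Nat.factorial (x + y + z) := h2
    _ = (x + y + z).choose (y + z) * Nat.factorial x * Nat.factorial (y + z) := h4.symm
    _ = (x + y + z).choose (y + z) * Nat.factorial x * ((y + z).choose z * Nat.factorial y * Nat.factorial z) := by rw [h3]
    _ = (y + z).choose z * (x + y + z).choose (y + z) * (Nat.factorial x * Nat.factorial y * Nat.factorial z) := by ring


lemma mvHasseDeriv_mvHasseDeriv (e j : Fin n →₀ ℕ) (f : MvPolynomial (Fin n) K) :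
    mvHasseDeriv e (mvHasseDeriv j f)
      = ((∏ i, ((e + j) i).choose (j i) : ℕ) : K) • mvHasseDeriv (e + j) f := by
  ext m
  rw [coeff_smul, coeff_mvHasseDeriv, coeff_mvHasseDeriv, coeff_mvHasseDeriv]
  rw [smul_eq_mul, ← mul_assoc, ← mul_assoc, ← Nat.cast_mul, ← Nat.cast_mul,
    ← Finset.prod_mul_distrib, ← Finset.prod_mul_distrib]
  have hassoc : m + e + j = m + (e + j) := add_assoc m e j
  rw [hassoc]
  congr 2
  apply Finset.prod_congr rfl
  intro i _
  simp only [Finsupp.add_apply]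
  have harg : m i + (e i + j i) = m i + e i + j i := (add_assoc _ _ _).symm
  rw [harg]
  exact choose_tri (m i) (e i) (j i)


lemma mvHasseDeriv_mul_X (j : Fin n →₀ ℕ) (k : Fin n) (f : MvPolynomial (Fin n) K) :
    mvHasseDeriv j (f * X k)
      = mvHasseDeriv j f * X k
        + (if j k = 0 then 0 else mvHasseDeriv (j - Finsupp.single k 1) f) := by
  classical
  ext m
  rw [coeff_add, coeff_mvHasseDeriv, coeff_mul_X', coeff_mul_X']
  by_cases hm : m k = 0 <;> by_cases hj : j k = 0
  · rw [if_neg (by simp [Finsupp.mem_support_iff, Finsupp.add_apply, hm, hj]),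
        if_neg (by simp [Finsupp.mem_support_iff, hm]), if_pos hj]
    simp
  · rw [if_pos (by simp [Finsupp.mem_support_iff, Finsupp.add_apply, hm, hj]),
        if_neg (by simp [Finsupp.mem_support_iff, hm]), if_neg hj, coeff_mvHasseDeriv]
    have hE : m + (j - Finsupp.single k 1) = m + j - Finsupp.single k 1 := by
      ext i
      simp only [Finsupp.add_apply, Finsupp.tsub_apply, Finsupp.single_apply]
      by_cases hik : k = i
      · subst hik; simp [hm]
      · simp [hik]
    rw [hE]
    have hκ : (∏ i, ((m + j) i).choose (j i))
        = ∏ i, (((m + j - Finsupp.single k 1 : Fin n →₀ ℕ)) i).choose (((j - Finsupp.single k 1 : Fin n →₀ ℕ)) i) := by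
      apply Finset.prod_congr rfl
      intro i _
      by_cases hik : i = k
      · subst hik
        simp [Finsupp.add_apply, Finsupp.tsub_apply, Finsupp.single_apply, hm, Nat.choose_self]
      · simp [Finsupp.add_apply, Finsupp.tsub_apply,
          Finsupp.single_eq_of_ne' (Ne.symm hik)]
    rw [hκ, zero_add]
  · rw [if_pos (by simp [Finsupp.mem_support_iff, Finsupp.add_apply, hm, hj]),
        if_pos (by simp [Finsupp.mem_support_iff, hm]), if_pos hj, coeff_mvHasseDeriv]
    have hE : m - Finsupp.single k 1 + j = m + j - Finsupp.single k 1 := by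
      ext i
      simp only [Finsupp.add_apply, Finsupp.tsub_apply, Finsupp.single_apply]
      by_cases hik : k = i
      · subst hik; simp [hj]
      · simp [hik]
    rw [hE]
    have hκ : (∏ i, ((m + j) i).choose (j i))
        = ∏ i, (((m + j - Finsupp.single k 1 : Fin n →₀ ℕ)) i).choose (j i) := by
      apply Finset.prod_congr rfl
      intro i _
      by_cases hik : i = k
      · subst hik
        simp [Finsupp.add_apply, Finsupp.tsub_apply, Finsupp.single_apply, hj]
      · simp [Finsupp.add_apply, Finsupp.tsub_apply,
          Finsupp.single_eq_of_ne' (Ne.symm hik)]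
    rw [hκ]
    simp
  · rw [if_pos (by simp [Finsupp.mem_support_iff, Finsupp.add_apply, hm, hj]),
        if_pos (by simp [Finsupp.mem_support_iff, hm]), if_neg hj,
        coeff_mvHasseDeriv, coeff_mvHasseDeriv]
    have hE2 : m - Finsupp.single k 1 + j = m + j - Finsupp.single k 1 := by
      ext i
      simp only [Finsupp.add_apply, Finsupp.tsub_apply, Finsupp.single_apply]
      by_cases hik : k = i
      · subst hik; simp; omega
      · simp [hik]
    have hE3 : m + (j - Finsupp.single k 1) = m + j - Finsupp.single k 1 := by
      ext i
      simp only [Finsupp.add_apply, Finsupp.tsub_apply, Finsupp.single_apply]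
      by_cases hik : k = i
      · subst hik; simp; omega
      · simp [hik]
    rw [hE2, hE3]
    obtain ⟨a, ha⟩ : ∃ a, m k = a + 1 := ⟨m k - 1, by omega⟩
    obtain ⟨b, hb⟩ : ∃ b, j k = b + 1 := ⟨j k - 1, by omega⟩
    have e1 : (∏ i, ((m + j) i).choose (j i))
        = (a + b + 1 + 1).choose (b + 1)
          * ∏ i ∈ Finset.univ.erase k, ((m + j) i).choose (j i) := by
      rw [← Finset.mul_prod_erase Finset.univ _ (Finset.mem_univ k)]
      congr 1
      simp only [Finsupp.add_apply, ha, hb]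
      congr 1
      omega
    have e2 : (∏ i, (((m + j - Finsupp.single k 1 : Fin n →₀ ℕ)) i).choose (j i))
        = (a + b + 1).choose (b + 1)
          * ∏ i ∈ Finset.univ.erase k, ((m + j) i).choose (j i) := by
      rw [← Finset.mul_prod_erase Finset.univ _ (Finset.mem_univ k)]
      congr 1
      · have h1 : ((m + j - Finsupp.single k 1 : Fin n →₀ ℕ)) k = a + b + 1 := by
          rw [Finsupp.tsub_apply, Finsupp.add_apply, Finsupp.single_eq_same, ha, hb]
          omega
        rw [h1, hb]
      · apply Finset.prod_congr rfl
        intro i hi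
        have hik : i ≠ k := Finset.ne_of_mem_erase hi
        congr 1
        simp [Finsupp.add_apply, Finsupp.tsub_apply, Finsupp.single_eq_of_ne' (Ne.symm hik)]
    have e3 : (∏ i, (((m + j - Finsupp.single k 1 : Fin n →₀ ℕ)) i).choose (((j - Finsupp.single k 1 : Fin n →₀ ℕ)) i))
        = (a + b + 1).choose b
          * ∏ i ∈ Finset.univ.erase k, ((m + j) i).choose (j i) := by
      rw [← Finset.mul_prod_erase Finset.univ _ (Finset.mem_univ k)]
      congr 1
      · have h1 : ((m + j - Finsupp.single k 1 : Fin n →₀ ℕ)) k = a + b + 1 := by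
          rw [Finsupp.tsub_apply, Finsupp.add_apply, Finsupp.single_eq_same, ha, hb]
          omega
        have h2 : ((j - Finsupp.single k 1 : Fin n →₀ ℕ)) k = b := by
          rw [Finsupp.tsub_apply, Finsupp.single_eq_same, hb]
          omega
        rw [h1, h2]
      · apply Finset.prod_congr rfl
        intro i hi
        have hik : i ≠ k := Finset.ne_of_mem_erase hi
        congr 1 <;>
          simp [Finsupp.add_apply, Finsupp.tsub_apply, Finsupp.single_eq_of_ne' (Ne.symm hik)]
    rw [e1, e2, e3, Nat.choose_succ_succ (a + b + 1) b]
    push_cast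
    ring


lemma mvHasseDeriv_monomial (j c : Fin n →₀ ℕ) (a : K) :
    mvHasseDeriv j (monomial c a)
      = monomial (c - j) (((∏ i, (c i).choose (j i) : ℕ) : K) * a) := by
  classical
  rw [mvHasseDeriv_eq_sum]
  by_cases ha : a = 0
  · simp [ha]
  · rw [support_monomial, if_neg ha, Finset.sum_singleton, coeff_monomial, if_pos rfl]

lemma eval_mvHasseDeriv (b : Fin n → K) (j : Fin n →₀ ℕ) (f : MvPolynomial (Fin n) K) :
    eval b (mvHasseDeriv j f) = coeff j (aeval (fun k => X k + C (b k)) f) := by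
  induction f using MvPolynomial.induction_on generalizing j with
  | C a =>
      rw [aeval_C, algebraMap_eq, coeff_C, C_apply, mvHasseDeriv_monomial]
      have h0 : (0 : Fin n →₀ ℕ) - j = 0 := by ext i; simp
      rw [h0, eval_monomial]
      by_cases hj : j = 0
      · subst hj; simp
      · obtain ⟨i, hi⟩ : ∃ i, j i ≠ 0 := by
          by_contra hcon
          push_neg at hcon
          exact hj (Finsupp.ext fun i => hcon i)
        have : (∏ i, (0 : ℕ).choose (j i)) = 0 :=
          Finset.prod_eq_zero (Finset.mem_univ i)
            (Nat.choose_eq_zero_of_lt (Nat.pos_of_ne_zero hi))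
        rw [if_neg (fun h => hj h.symm)]
        simp [this]
  | add p q hp hq =>
      simp [mvHasseDeriv_add, coeff_add, hp, hq]
  | mul_X p k hp =>
      rw [mvHasseDeriv_mul_X, map_add, eval_mul, eval_X, map_mul, aeval_X, mul_add,
        coeff_add, coeff_mul_X']
      have hcc : (aeval fun k => X k + C (b k) : MvPolynomial (Fin n) K →ₐ[K] _) p * C (b k)
          = C (b k) * (aeval fun k => X k + C (b k)) p := mul_comm _ _
      rw [hcc, coeff_C_mul]
      by_cases hjk : j k = 0
      · rw [if_pos hjk, if_neg (by simp [Finsupp.mem_support_iff, hjk]), hp j]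
        simp [mul_comm]
      · rw [if_neg hjk, if_pos (by simp [Finsupp.mem_support_iff, hjk]), hp j,
          hp (j - Finsupp.single k 1)]
        ring

lemma aeval_shift_mvHasseDeriv (a : Fin n → K) (j : Fin n →₀ ℕ) (f : MvPolynomial (Fin n) K) :
    aeval (fun k => X k + C (a k)) (mvHasseDeriv j f)
      = mvHasseDeriv j (aeval (fun k => X k + C (a k)) f) := by
  ext m
  rw [coeff_mvHasseDeriv, ← eval_mvHasseDeriv, ← eval_mvHasseDeriv,
    mvHasseDeriv_mvHasseDeriv, smul_eq_C_mul, eval_mul, eval_C]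


lemma degree_eq_sum_univ (j : Fin n →₀ ℕ) : j.degree = ∑ i, j i := by
  rw [Finsupp.degree]
  exact Finset.sum_subset (Finset.subset_univ _)
    (fun i _ hi => Finsupp.notMem_support_iff.mp hi)

lemma sum_univ_eq_sum (j : Fin n →₀ ℕ) : (j.sum fun _ e => e) = ∑ i, j i := by
  rw [Finsupp.sum]
  exact Finset.sum_subset (Finset.subset_univ _)
    (fun i _ hi => Finsupp.notMem_support_iff.mp hi)

lemma sum_univ_add (a b : Fin n →₀ ℕ) : (∑ i, (a + b) i) = (∑ i, a i) + ∑ i, b i := by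
  simp [Finsupp.add_apply, Finset.sum_add_distrib]

lemma totalDegree_mvHasseDeriv_le (j : Fin n →₀ ℕ) (f : MvPolynomial (Fin n) K) :
    (mvHasseDeriv j f).totalDegree ≤ f.totalDegree - ∑ i, j i := by
  rw [MvPolynomial.totalDegree]
  apply Finset.sup_le
  intro c hc
  have hcf : coeff (c + j) f ≠ 0 := by
    intro h0
    rw [mem_support_iff, coeff_mvHasseDeriv, h0, mul_zero] at hc
    exact hc rfl
  have h1 : ((c + j).sum fun _ e => e) ≤ f.totalDegree :=
    le_totalDegree (mem_support_iff.mpr hcf)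
  rw [sum_univ_eq_sum, sum_univ_add] at h1
  rw [sum_univ_eq_sum]
  omega

lemma mvHasseDeriv_homogeneousComponent_zero (j : Fin n →₀ ℕ) (f : MvPolynomial (Fin n) K)
    (d : ℕ) (h : d < ∑ i, j i) :
    mvHasseDeriv j (homogeneousComponent d f) = 0 := by
  ext m
  rw [coeff_mvHasseDeriv, coeff_homogeneousComponent, coeff_zero]
  rw [if_neg, mul_zero]
  rw [degree_eq_sum_univ, sum_univ_add]
  omega

lemma mvHasseDeriv_homogeneousComponent (j : Fin n →₀ ℕ) (f : MvPolynomial (Fin n) K)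
    (d : ℕ) (h : (∑ i, j i) ≤ d) :
    homogeneousComponent (d - ∑ i, j i) (mvHasseDeriv j f)
      = mvHasseDeriv j (homogeneousComponent d f) := by
  ext m
  rw [coeff_homogeneousComponent, coeff_mvHasseDeriv, coeff_mvHasseDeriv,
    coeff_homogeneousComponent]
  rw [degree_eq_sum_univ, degree_eq_sum_univ, sum_univ_add]
  by_cases hm : (∑ i, m i) = d - ∑ i, j i
  · rw [if_pos hm, if_pos (by omega)]
  · rw [if_neg hm, if_neg (by omega), mul_zero]

lemma coeff_pow_linear (u v : K) (m : ℕ) :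
    ((Polynomial.C u + Polynomial.C v * Polynomial.X) ^ m).coeff m = v ^ m := by
  induction m with
  | zero => simp
  | succ m ih =>
      have hnd : (Polynomial.C u + Polynomial.C v * Polynomial.X).natDegree ≤ 1 :=
        (Polynomial.natDegree_add_le _ _).trans
          (by simp [Polynomial.natDegree_C_mul_le _ _ |>.trans Polynomial.natDegree_X_le])
      have hndp : ((Polynomial.C u + Polynomial.C v * Polynomial.X) ^ m).natDegree ≤ m := by
        refine Polynomial.natDegree_pow_le.trans ?_
        calc m * (Polynomial.C u + Polynomial.C v * Polynomial.X).natDegree ≤ m * 1 :=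
              Nat.mul_le_mul_left m hnd
          _ = m := mul_one m
      have hexp : (Polynomial.C u + Polynomial.C v * Polynomial.X) ^ (m + 1)
          = (Polynomial.C u + Polynomial.C v * Polynomial.X) ^ m * Polynomial.C u
            + ((Polynomial.C u + Polynomial.C v * Polynomial.X) ^ m * Polynomial.C v)
              * Polynomial.X := by ring
      rw [hexp, Polynomial.coeff_add, Polynomial.coeff_mul_C, Polynomial.coeff_mul_X,
        Polynomial.coeff_mul_C, ih,
        Polynomial.coeff_eq_zero_of_natDegree_lt (lt_of_le_of_lt hndp (Nat.lt_succ_self m))]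
      ring

lemma coeff_prod_natDegree_le {ι : Type*} (s : Finset ι) (f : ι → Polynomial K) (d : ι → ℕ)
    (h : ∀ i ∈ s, (f i).natDegree ≤ d i) :
    (∏ i ∈ s, f i).coeff (∑ i ∈ s, d i) = ∏ i ∈ s, (f i).coeff (d i) := by
  classical
  induction s using Finset.cons_induction with
  | empty => simp
  | cons a s ha ih =>
      rw [Finset.prod_cons, Finset.sum_cons, Finset.prod_cons]
      rw [Polynomial.coeff_mul_add_eq_of_natDegree_le (h a (Finset.mem_cons_self a s))
        ((Polynomial.natDegree_prod_le s f).trans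
          (Finset.sum_le_sum (fun i hi => h i (Finset.mem_cons_of_mem hi))))]
      rw [ih (fun i hi => h i (Finset.mem_cons_of_mem hi))]


lemma natDegree_pow_linear_le (u v : K) (m : ℕ) :
    ((Polynomial.C u + Polynomial.C v * Polynomial.X) ^ m).natDegree ≤ m := by
  have hnd : (Polynomial.C u + Polynomial.C v * Polynomial.X).natDegree ≤ 1 :=
    (Polynomial.natDegree_add_le _ _).trans
      (by simp [Polynomial.natDegree_C_mul_le _ _ |>.trans Polynomial.natDegree_X_le])
  refine Polynomial.natDegree_pow_le.trans ?_
  calc m * (Polynomial.C u + Polynomial.C v * Polynomial.X).natDegree ≤ m * 1 :=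
        Nat.mul_le_mul_left m hnd
    _ = m := mul_one m

lemma homogeneousComponent_monomial' (e : ℕ) (c : Fin n →₀ ℕ) (a : K) :
    homogeneousComponent e (monomial c a)
      = if (∑ i, c i) = e then monomial c a else 0 := by
  classical
  ext m
  rw [coeff_homogeneousComponent, degree_eq_sum_univ]
  by_cases hmc : m = c
  · subst hmc
    split_ifs with h1 <;> simp [coeff_monomial]
  · have h2 : coeff m (monomial c a) = 0 := by
      rw [coeff_monomial, if_neg (fun hh => hmc hh.symm)]
    split_ifs <;> simp [h2]

lemma coeff_aeval_line (u v : Fin n → K) (h : MvPolynomial (Fin n) K) (e : ℕ)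
    (hd : h.totalDegree ≤ e) :
    (aeval (fun i => Polynomial.C (u i) + Polynomial.C (v i) * Polynomial.X) h).coeff e
      = eval v (homogeneousComponent e h) := by
  classical
  conv_lhs => rw [h.as_sum]
  conv_rhs => rw [h.as_sum]
  rw [map_sum, map_sum (homogeneousComponent e), Polynomial.finset_sum_coeff, map_sum]
  apply Finset.sum_congr rfl
  intro c hc
  have hce : (∑ i, c i) ≤ e := by
    rw [← sum_univ_eq_sum]
    exact (le_totalDegree hc).trans hd
  rw [aeval_monomial, Polynomial.algebraMap_eq, Polynomial.coeff_C_mul,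
    Finsupp.prod_fintype _ _ (fun i => pow_zero _), homogeneousComponent_monomial']
  by_cases hceq : (∑ i, c i) = e
  · rw [if_pos hceq, eval_monomial, Finsupp.prod_fintype _ _ (fun i => pow_zero _), ← hceq,
      coeff_prod_natDegree_le _ _ _ (fun i _ => natDegree_pow_linear_le (u i) (v i) (c i))]
    congr 1
    apply Finset.prod_congr rfl
    intro i _
    exact coeff_pow_linear (u i) (v i) (c i)
  · rw [if_neg hceq, map_zero, mul_comm]
    rw [Polynomial.coeff_eq_zero_of_natDegree_lt, zero_mul]
    refine lt_of_le_of_lt ((Polynomial.natDegree_prod_le _ _).trans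
      (Finset.sum_le_sum (fun i _ => natDegree_pow_linear_le (u i) (v i) (c i)))) ?_
    omega

lemma natDegree_aeval_line_le (u v : Fin n → K) (h : MvPolynomial (Fin n) K) :
    (aeval (fun i => Polynomial.C (u i) + Polynomial.C (v i) * Polynomial.X) h).natDegree
      ≤ h.totalDegree := by
  conv_lhs => rw [h.as_sum]
  rw [map_sum]
  apply Polynomial.natDegree_sum_le_of_forall_le
  intro c hc
  rw [aeval_monomial, Polynomial.algebraMap_eq]
  refine (Polynomial.natDegree_C_mul_le _ _).trans ?_
  rw [Finsupp.prod_fintype _ _ (fun i => pow_zero _)]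
  refine (Polynomial.natDegree_prod_le _ _).trans ?_
  refine (Finset.sum_le_sum (fun i _ => natDegree_pow_linear_le (u i) (v i) (c i))).trans ?_
  rw [← sum_univ_eq_sum]
  exact le_totalDegree hc

lemma pow_sub_dvd_aeval (v : Fin n → K) (t : K) (h : MvPolynomial (Fin n) K) (r : ℕ)
    (hs : ∀ c ∈ h.support, r ≤ ∑ i, c i) :
    (Polynomial.X - Polynomial.C t) ^ r
      ∣ aeval (fun i => Polynomial.C (v i) * (Polynomial.X - Polynomial.C t)) h := by
  conv_rhs => rw [h.as_sum]
  rw [map_sum]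
  apply Finset.dvd_sum
  intro c hc
  rw [aeval_monomial, Finsupp.prod_fintype _ _ (fun i => pow_zero _)]
  simp_rw [mul_pow]
  rw [Finset.prod_mul_distrib, Finset.prod_pow_eq_pow_sum]
  exact Dvd.dvd.mul_left (Dvd.dvd.mul_left (pow_dvd_pow _ (hs c hc)) _) _


lemma exists_sym_inj (n k : ℕ) :
    ∃ g : {j : Fin n →₀ ℕ // (∑ i, j i) ≤ k} → Sym (Fin (n + 1)) k,
      Function.Injective g := by
  classical
  refine ⟨fun j => ⟨Finsupp.toMultiset (Finsupp.mapDomain Fin.castSucc j.1)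
    + Multiset.replicate (k - ∑ i, j.1 i) (Fin.last n), ?_⟩, ?_⟩
  · rw [Multiset.card_add, Multiset.card_replicate, Finsupp.card_toMultiset,
      Finsupp.sum_mapDomain_index (fun _ => rfl) (fun _ _ _ => rfl)]
    have hs2 : (j.1.sum fun _ m => id m) = ∑ i, j.1 i := sum_univ_eq_sum j.1
    rw [hs2]
    have := j.2
    omega
  · intro j1 j2 hgeq
    apply Subtype.ext
    ext i
    have hM := congrArg Subtype.val hgeq
    have hc := congrArg (Multiset.count (Fin.castSucc i)) hM
    have hne : (Fin.castSucc i) ≠ Fin.last n := (Fin.castSucc_lt_last i).ne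
    rw [Multiset.count_add, Multiset.count_add, Multiset.count_replicate,
      Multiset.count_replicate] at hc
    simp only [if_neg (Ne.symm hne)] at hc
    rw [Finsupp.count_toMultiset, Finsupp.count_toMultiset,
      Finsupp.mapDomain_apply (Fin.castSucc_injective n),
      Finsupp.mapDomain_apply (Fin.castSucc_injective n)] at hc
    simpa using hc

end KakeyaAux

open KakeyaAux

/-- Lines are given as pairs `(point, direction)` with nonzero direction; every line of `L`
contains at least `N` points of `S`; `U` is a subspace of polynomials of degree `≤ rN - 1`
such that no nonzero `f ∈ U` has top-degree part `f*` vanishing to multiplicity `r` at every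
direction of a line of `L`.  Then `binom (2r+n-2) n * |S| ≥ dim U`. -/
theorem kakeya_lower_bound_ideal {K : Type*} [Field K] {n N r : ℕ} (hr : 1 ≤ r)
    (L : Finset ((Fin n → K) × (Fin n → K))) (hL : ∀ p ∈ L, p.2 ≠ 0)
    (S : Finset (Fin n → K))
    (hS : ∀ p ∈ L, ∃ Λ : Finset K, N ≤ Λ.card ∧ ∀ t ∈ Λ, p.1 + t • p.2 ∈ S)
    (U : Submodule K (MvPolynomial (Fin n) K))
    (hdeg : ∀ f ∈ U, f ≠ 0 → f.totalDegree < r * N)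
    (hU : ∀ f ∈ U, f ≠ 0 → ∃ p ∈ L, ∃ j : Fin n →₀ ℕ, (∑ i, j i) < r ∧
      eval p.2 (mvHasseDeriv j (homogeneousComponent f.totalDegree f)) ≠ 0) :
    Module.finrank K U ≤ (2 * r + n - 2).choose n * S.card := by
  classical
  have key : ∀ f ∈ U, (∀ s ∈ S, ∀ j : Fin n →₀ ℕ, (∑ i, j i) ≤ 2 * r - 2 →
      eval s (mvHasseDeriv j f) = 0) → f = 0 := by
    intro f hfU hvan
    by_contra hf0
    obtain ⟨p, hpL, j, hjr, hc0⟩ := hU f hfU hf0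
    have hwd : (∑ i, j i) ≤ f.totalDegree := by
      by_contra hcon
      push_neg at hcon
      rw [mvHasseDeriv_homogeneousComponent_zero j f f.totalDegree hcon] at hc0
      simp at hc0
    have hgdeg : (mvHasseDeriv j f).totalDegree ≤ f.totalDegree - ∑ i, j i :=
      totalDegree_mvHasseDeriv_le j f
    have hqcoeff : (aeval (fun i => Polynomial.C (p.1 i) + Polynomial.C (p.2 i) * Polynomial.X)
          (mvHasseDeriv j f)).coeff (f.totalDegree - ∑ i, j i)
        = eval p.2 (mvHasseDeriv j (homogeneousComponent f.totalDegree f)) := by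
      rw [coeff_aeval_line _ _ _ _ hgdeg, mvHasseDeriv_homogeneousComponent j f _ hwd]
    have hqne : (aeval (fun i => Polynomial.C (p.1 i) + Polynomial.C (p.2 i) * Polynomial.X)
        (mvHasseDeriv j f)) ≠ 0 := by
      intro h0
      rw [h0, Polynomial.coeff_zero] at hqcoeff
      exact hc0 hqcoeff.symm
    have hqd : (aeval (fun i => Polynomial.C (p.1 i) + Polynomial.C (p.2 i) * Polynomial.X)
          (mvHasseDeriv j f)).natDegree ≤ f.totalDegree - ∑ i, j i :=
      (natDegree_aeval_line_le _ _ _).trans hgdeg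
    obtain ⟨Λ, hΛc, hΛS⟩ := hS p hpL
    have hdvd : ∀ t ∈ Λ, (Polynomial.X - Polynomial.C t) ^ r
        ∣ aeval (fun i => Polynomial.C (p.1 i) + Polynomial.C (p.2 i) * Polynomial.X)
            (mvHasseDeriv j f) := by
      intro t ht
      have haS : (fun i => p.1 i + t * p.2 i) ∈ S := by
        have h1 := hΛS t ht
        have h2 : p.1 + t • p.2 = fun i => p.1 i + t * p.2 i := by
          funext i
          simp
        rwa [h2] at h1
      have hcomp : ∀ h : MvPolynomial (Fin n) K,
          aeval (fun i => Polynomial.C (p.2 i) * (Polynomial.X - Polynomial.C t))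
              (aeval (fun l => X l + C (p.1 l + t * p.2 l)) h)
            = aeval (fun i => Polynomial.C (p.1 i) + Polynomial.C (p.2 i) * Polynomial.X) h := by
        intro h
        rw [← AlgHom.comp_apply]
        refine DFunLike.congr_fun (MvPolynomial.algHom_ext fun i => ?_) h
        simp only [AlgHom.comp_apply, aeval_X, map_add, aeval_C, Polynomial.algebraMap_eq,
          map_mul]
        ring
      have hq2 : aeval (fun i => Polynomial.C (p.1 i) + Polynomial.C (p.2 i) * Polynomial.X)
            (mvHasseDeriv j f)
          = aeval (fun i => Polynomial.C (p.2 i) * (Polynomial.X - Polynomial.C t))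
              (mvHasseDeriv j (aeval (fun l => X l + C (p.1 l + t * p.2 l)) f)) := by
        rw [← aeval_shift_mvHasseDeriv, hcomp]
      rw [hq2]
      apply pow_sub_dvd_aeval
      intro c hc
      have hcne := mem_support_iff.mp hc
      rw [coeff_mvHasseDeriv] at hcne
      have h2 : coeff (c + j) (aeval (fun l => X l + C (p.1 l + t * p.2 l)) f) ≠ 0 :=
        fun h0 => hcne (by rw [h0, mul_zero])
      have h3 : ¬ (∑ i, (c + j) i) ≤ 2 * r - 2 := by
        intro hle
        apply h2
        rw [← eval_mvHasseDeriv]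
        exact hvan _ haS (c + j) hle
      rw [sum_univ_add] at h3
      omega
    have hcount : ∀ t ∈ Λ, r ≤ (aeval (fun i => Polynomial.C (p.1 i)
        + Polynomial.C (p.2 i) * Polynomial.X) (mvHasseDeriv j f)).roots.count t := by
      intro t ht
      rw [Polynomial.count_roots]
      exact (Polynomial.le_rootMultiplicity_iff hqne).mpr (hdvd t ht)
    set q := aeval (fun i => Polynomial.C (p.1 i) + Polynomial.C (p.2 i) * Polynomial.X)
      (mvHasseDeriv j f) with hqdef
    have h1 : r * Λ.card ≤ ∑ t ∈ Λ, q.roots.count t := by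
      calc r * Λ.card = ∑ _t ∈ Λ, r := by rw [Finset.sum_const, smul_eq_mul, mul_comm]
        _ ≤ ∑ t ∈ Λ, q.roots.count t := Finset.sum_le_sum hcount
    have h2 : (∑ t ∈ Λ, q.roots.count t) ≤ Multiset.card q.roots := by
      calc (∑ t ∈ Λ, q.roots.count t)
          ≤ ∑ t ∈ Λ ∪ q.roots.toFinset, q.roots.count t :=
            Finset.sum_le_sum_of_subset Finset.subset_union_left
        _ = ∑ t ∈ q.roots.toFinset, q.roots.count t :=
            (Finset.sum_subset Finset.subset_union_right (fun x _ hx =>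
              Multiset.count_eq_zero.mpr (fun hmem => hx (Multiset.mem_toFinset.mpr hmem)))).symm
        _ = Multiset.card q.roots := Multiset.toFinset_sum_count_eq _
    have h3 := Polynomial.card_roots' q
    have h4 := hdeg f hfU hf0
    have h5 : r * N ≤ r * Λ.card := Nat.mul_le_mul_left r hΛc
    omega
  obtain ⟨g0, hg0⟩ := exists_sym_inj n (2 * r - 2)
  haveI : Fintype {j : Fin n →₀ ℕ // (∑ i, j i) ≤ 2 * r - 2} := Fintype.ofInjective g0 hg0
  let Φ : MvPolynomial (Fin n) K →ₗ[K]
      (({x // x ∈ S} × {j : Fin n →₀ ℕ // (∑ i, j i) ≤ 2 * r - 2}) → K) :=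
    LinearMap.pi (fun sj =>
      { toFun := fun f => eval (sj.1 : Fin n → K) (mvHasseDeriv sj.2.1 f)
        map_add' := fun a b => by rw [mvHasseDeriv_add, map_add]
        map_smul' := fun c a => by
          dsimp only [RingHom.id_apply]
          rw [show mvHasseDeriv sj.2.1 (c • a) = c • mvHasseDeriv sj.2.1 a from
            (mvHasseDerivL sj.2.1).map_smul c a, smul_eq_C_mul, map_mul, eval_C,
            smul_eq_mul] })
  have hinj : Function.Injective (Φ.domRestrict U) := by
    rw [← LinearMap.ker_eq_bot, LinearMap.ker_eq_bot']
    intro m hm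
    have hv : ∀ s ∈ S, ∀ jj : Fin n →₀ ℕ, (∑ i, jj i) ≤ 2 * r - 2 →
        eval s (mvHasseDeriv jj (m : MvPolynomial (Fin n) K)) = 0 := by
      intro s hs jj hjj
      have h1 : Φ.domRestrict U m (⟨⟨s, hs⟩, ⟨jj, hjj⟩⟩) = 0 := by rw [hm]; rfl
      simpa [Φ, LinearMap.domRestrict_apply, LinearMap.pi_apply] using h1
    exact Subtype.ext (key m.1 m.2 hv)
  have hrank := LinearMap.finrank_le_finrank_of_injective hinj
  rw [Module.finrank_fintype_fun_eq_card, Fintype.card_prod, Fintype.card_coe] at hrank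
  have hcard : Fintype.card {j : Fin n →₀ ℕ // (∑ i, j i) ≤ 2 * r - 2}
      ≤ (2 * r + n - 2).choose n := by
    have h1 := Fintype.card_le_of_injective g0 hg0
    rw [Sym.card_sym_eq_choose] at h1
    have h2 : Fintype.card (Fin (n + 1)) + (2 * r - 2) - 1 = 2 * r + n - 2 := by
      rw [Fintype.card_fin]
      omega
    rw [h2] at h1
    have h3 : (2 * r + n - 2).choose (2 * r - 2) = (2 * r + n - 2).choose n := by
      have hn : n ≤ 2 * r + n - 2 := by omega
      have h4 := Nat.choose_symm hn
      rw [show 2 * r + n - 2 - n = 2 * r - 2 by omega] at h4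
      exact h4
    rw [h3] at h1
    exact h1
  calc Module.finrank K U
      ≤ S.card * Fintype.card {j : Fin n →₀ ℕ // (∑ i, j i) ≤ 2 * r - 2} := hrank
    _ ≤ S.card * (2 * r + n - 2).choose n := Nat.mul_le_mul_left _ hcard
    _ = (2 * r + n - 2).choose n * S.card := mul_comm _ _
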